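/- arXiv:1803.04726 — 3 statements merged into one kernel-verified Lean document; each statement's English description precedes it below -/
import Mathlib

section
/- Let X, Y be Hilbert spaces and P̃ : X → Y a bounded linear operator with closed range. Let R : X → ℝ ∪ {∞} and f_ref ∈ X satisfy R(f_ref + P̃*(p) + f₀) ≥ R(f_ref + P̃*(p)) for all p ∈ Y and all f₀ ∈ ker(P̃). Let S̃ : Y → ℝ ∪ {∞} be any functional. If f_new minimizes f ↦ S̃(P̃(f)) + R(f) over X, then there exists Δp ∈ Y minimizing p ↦ S̃(P̃(f_ref) + P̃ P̃*(p)) + R(f_ref + P̃*(p)) over Y, and f̃_new := f_ref + P̃*(Δp) also minimizes f ↦ S̃(P̃(f)) + R(f) over X. -/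
open ContinuousLinearMap
open scoped RealInnerProductSpace

/-- Generalized SART principle (existence direction): if `f_new` minimizes
`f ↦ S̃(P̃ f) + R f`, then there is `Δp` minimizing the projection-space functional
and `f_ref + P̃* Δp` also minimizes the original functional. -/
theorem stmt0
    {X Y : Type*} [NormedAddCommGroup X] [InnerProductSpace ℝ X] [CompleteSpace X]
    [NormedAddCommGroup Y] [InnerProductSpace ℝ Y] [CompleteSpace Y]
    (P : X →L[ℝ] Y) (hclosed : IsClosed (Set.range P))
    (R : X → EReal) (S : Y → EReal) (f_ref : X)
    (hadm : ∀ (p : Y) (f₀ : X), P f₀ = 0 →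
      R (f_ref + (adjoint P) p + f₀) ≥ R (f_ref + (adjoint P) p))
    (f_new : X) (hmin : ∀ f : X, S (P f_new) + R f_new ≤ S (P f) + R f) :
    ∃ Δp : Y,
      (∀ p : Y,
        S (P f_ref + P ((adjoint P) Δp)) + R (f_ref + (adjoint P) Δp)
          ≤ S (P f_ref + P ((adjoint P) p)) + R (f_ref + (adjoint P) p)) ∧
      (∀ f : X,
        S (P (f_ref + (adjoint P) Δp)) + R (f_ref + (adjoint P) Δp) ≤ S (P f) + R f) := by
  classical
  set K : Submodule ℝ X := LinearMap.ker (P : X →ₗ[ℝ] Y) with hK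
  have hKclosed : IsClosed (K : Set X) := ContinuousLinearMap.isClosed_ker P
  set M : Submodule ℝ Y := LinearMap.range (P : X →ₗ[ℝ] Y) with hM
  have hMclosed : IsClosed (M : Set Y) := by
    simpa [hM, LinearMap.coe_range] using hclosed
  haveI : CompleteSpace M := hMclosed.completeSpace_coe
  haveI : CompleteSpace K := hKclosed.completeSpace_coe
  haveI : CompleteSpace Kᗮ := (Submodule.isClosed_orthogonal K).completeSpace_coe
  -- The restricted map L : Kᗮ → M
  set L : Kᗮ →L[ℝ] M :=
    ContinuousLinearMap.codRestrict (P.comp Kᗮ.subtypeL) M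
      (fun x => LinearMap.mem_range_self _ _) with hL
  have hLinj : LinearMap.ker (L : Kᗮ →ₗ[ℝ] M) = ⊥ := by
    rw [LinearMap.ker_eq_bot']
    intro m hm
    have hPm : P (m : X) = 0 := congrArg Subtype.val hm
    have hmK : (m : X) ∈ K := hPm
    have h0 : ⟪(m : X), (m : X)⟫ = 0 :=
      Submodule.inner_right_of_mem_orthogonal hmK m.2
    exact Subtype.ext (inner_self_eq_zero.mp h0)
  have hLsurj : LinearMap.range (L : Kᗮ →ₗ[ℝ] M) = ⊤ := by
    rw [LinearMap.range_eq_top]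
    rintro ⟨y, x, rfl⟩
    refine ⟨Submodule.orthogonalProjectionOnto Kᗮ x, ?_⟩
    apply Subtype.ext
    have hdecomp : ((Submodule.orthogonalProjectionOnto K x : X)) + ((Submodule.orthogonalProjectionOnto Kᗮ x : X)) = x :=
      Submodule.starProjection_add_starProjection_orthogonal (K := K) x
    have hk : P ((Submodule.orthogonalProjectionOnto K x : X)) = 0 := (Submodule.orthogonalProjectionOnto K x).2
    calc (L (Submodule.orthogonalProjectionOnto Kᗮ x) : Y) = P ((Submodule.orthogonalProjectionOnto Kᗮ x : X)) := rfl
      _ = P ((Submodule.orthogonalProjectionOnto K x : X)) + P ((Submodule.orthogonalProjectionOnto Kᗮ x : X)) := by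
          rw [hk, zero_add]
      _ = P x := by rw [← map_add, hdecomp]
  set e : Kᗮ ≃L[ℝ] M := ContinuousLinearEquiv.ofBijective L hLinj hLsurj with he
  -- g : the Kᗮ-component of f_new - f_ref
  set g : X := (Submodule.orthogonalProjectionOnto Kᗮ (f_new - f_ref) : X) with hg
  have hgmem : g ∈ Kᗮ := (Submodule.orthogonalProjectionOnto Kᗮ (f_new - f_ref)).2
  -- the functional ψ
  set ψ : Y →L[ℝ] ℝ :=
    (innerSL ℝ g).comp (Kᗮ.subtypeL.comp
      ((e.symm : M →L[ℝ] Kᗮ).comp (Submodule.orthogonalProjectionOnto M))) with hψ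
  set q : Y := (InnerProductSpace.toDual ℝ Y).symm ψ with hq
  have hinner : ∀ y : Y, ⟪q, y⟫ = ψ y := fun y => InnerProductSpace.toDual_symm_apply
  -- adjoint P q = g
  have hadj : adjoint P q = g := by
    apply ext_inner_right ℝ
    intro x
    rw [adjoint_inner_left, hinner]
    have hPx : P x ∈ M := LinearMap.mem_range_self _ _
    have hproj : Submodule.orthogonalProjectionOnto M (P x) = ⟨P x, hPx⟩ :=
      Submodule.orthogonalProjectionOnto_mem_subspace_eq_self (⟨P x, hPx⟩ : M)
    set w : Kᗮ := e.symm ⟨P x, hPx⟩ with hw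
    have hPw : P (w : X) = P x := by
      have : L w = ⟨P x, hPx⟩ := e.apply_symm_apply ⟨P x, hPx⟩
      exact congrArg Subtype.val this
    have hxw : x - (w : X) ∈ K := by
      simp only [hK, LinearMap.mem_ker, map_sub, ContinuousLinearMap.coe_coe, hPw, sub_self]
    have horth : ⟪g, x - (w : X)⟫ = 0 :=
      Submodule.inner_left_of_mem_orthogonal hxw hgmem
    have hψPx : ψ (P x) = ⟪g, (w : X)⟫ := by
      simp [hψ, hproj, hw]
    rw [hψPx]
    have hs := inner_sub_right (𝕜 := ℝ) g x (w : X)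
    linarith
  -- the candidate minimizer
  set ft : X := f_ref + adjoint P q with hft
  have hPft : P ft = P f_new := by
    have hdecomp : ((Submodule.orthogonalProjectionOnto K (f_new - f_ref) : X)) + g = f_new - f_ref :=
      Submodule.starProjection_add_starProjection_orthogonal (K := K) (f_new - f_ref)
    have hkmem : (f_new - f_ref) - g ∈ K := by
      have he2 : (f_new - f_ref) - g = (Submodule.orthogonalProjectionOnto K (f_new - f_ref) : X) :=
        (eq_sub_of_add_eq hdecomp).symm
      rw [he2]; exact (Submodule.orthogonalProjectionOnto K (f_new - f_ref)).2
    have h1 : P g = P f_new - P f_ref := by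
      have h0 := hkmem
      rw [hK, LinearMap.mem_ker, map_sub, map_sub, sub_sub, sub_eq_zero, ContinuousLinearMap.coe_coe] at h0
      rw [h0]; abel
    rw [hft, hadj, map_add, h1]; abel
  have hRft : R ft ≤ R f_new := by
    have h0 : P (f_new - ft) = 0 := by rw [map_sub, hPft, sub_self]
    have := hadm q (f_new - ft) h0
    simpa [hft] using this
  have hmin2 : ∀ f : X, S (P ft) + R ft ≤ S (P f) + R f := by
    intro f
    calc S (P ft) + R ft = S (P f_new) + R ft := by rw [hPft]
      _ ≤ S (P f_new) + R f_new := add_le_add_right hRft _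
      _ ≤ S (P f) + R f := hmin f
  refine ⟨q, ?_, fun f => hmin2 f⟩
  intro p
  have h1 : P f_ref + P (adjoint P q) = P ft := by rw [hft, map_add]
  have h2 : P f_ref + P (adjoint P p) = P (f_ref + adjoint P p) := by rw [map_add]
  rw [h1, h2, ← hft]
  exact hmin2 (f_ref + adjoint P p)
end

section
/- Let X, Y be Hilbert spaces, A : X → Y bounded linear with A A* = D for some bounded self-adjoint operator D ≥ 0 on Y, let α > 0 and g ∈ Y, f₀ ∈ X. Then the unique minimizer of f ↦ ‖A f − g‖² + α‖f − f₀‖² is f_new = f₀ + A*(D + α·id)⁻¹(g − A f₀). -/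
open ContinuousLinearMap

/-- Abstract SART formula: if `A A* = D` with `D` self-adjoint and nonnegative,
the unique minimizer of `f ↦ ‖A f − g‖² + α‖f − f₀‖²` is
`f₀ + A*(D + α·id)⁻¹(g − A f₀)`, the inverse being expressed via the unique
solution `q` of `(D + α·id) q = g − A f₀`. -/
theorem stmt6
    {X Y : Type*} [NormedAddCommGroup X] [InnerProductSpace ℝ X] [CompleteSpace X]
    [NormedAddCommGroup Y] [InnerProductSpace ℝ Y] [CompleteSpace Y]
    (A : X →L[ℝ] Y) (D : Y →L[ℝ] Y)
    (hD : A.comp (adjoint A) = D) (hsa : IsSelfAdjoint D)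
    (hpos : ∀ y : Y, (0 : ℝ) ≤ inner ℝ (D y) y)
    (α : ℝ) (hα : 0 < α) (g : Y) (f₀ : X) :
    (∃! q : Y, (D + α • ContinuousLinearMap.id ℝ Y) q = g - A f₀) ∧
    ∀ q : Y, (D + α • ContinuousLinearMap.id ℝ Y) q = g - A f₀ →
      (∀ f : X,
        ‖A (f₀ + (adjoint A) q) - g‖ ^ 2 + α * ‖(f₀ + (adjoint A) q) - f₀‖ ^ 2
          ≤ ‖A f - g‖ ^ 2 + α * ‖f - f₀‖ ^ 2) ∧
      (∀ f : X,
        (∀ f' : X, ‖A f - g‖ ^ 2 + α * ‖f - f₀‖ ^ 2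
            ≤ ‖A f' - g‖ ^ 2 + α * ‖f' - f₀‖ ^ 2) →
        f = f₀ + (adjoint A) q) := by
  set T : Y →L[ℝ] Y := D + α • ContinuousLinearMap.id ℝ Y with hT
  have hTapp : ∀ y : Y, T y = D y + α • y := by intro y; simp [hT]
  have hcoer : ∀ y : Y, α * ‖y‖ * ‖y‖ ≤ inner ℝ (T y) y := by
    intro y
    have h1 : (inner ℝ (T y) y : ℝ) = inner ℝ (D y) y + α * (inner ℝ y y : ℝ) := by
      rw [hTapp, inner_add_left, real_inner_smul_left]
    rw [h1, real_inner_self_eq_norm_mul_norm]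
    nlinarith [hpos y]
  have hB : IsCoercive ((innerSL ℝ).comp T) :=
    ⟨α, hα, fun u => by simpa using hcoer u⟩
  have hker : ∀ z : Y, T z = 0 → z = 0 := by
    intro z hz
    have h1 := hcoer z
    rw [hz, inner_zero_left] at h1
    have h2 : ‖z‖ * ‖z‖ ≤ 0 := by nlinarith
    have h3 : ‖z‖ = 0 := by nlinarith [norm_nonneg z]
    simpa using h3
  have hsolve : T (hB.continuousLinearEquivOfBilin.symm (g - A f₀)) = g - A f₀ := by
    set q := hB.continuousLinearEquivOfBilin.symm (g - A f₀) with hq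
    have h1 : ∀ w : Y, (inner ℝ (T q) w : ℝ) = inner ℝ (g - A f₀) w := by
      intro w
      have h := hB.continuousLinearEquivOfBilin_apply q w
      rw [hq, ContinuousLinearEquiv.apply_symm_apply] at h
      exact h.symm
    exact ext_inner_right ℝ h1
  have hex : ∃! q : Y, T q = g - A f₀ := by
    refine ⟨hB.continuousLinearEquivOfBilin.symm (g - A f₀), hsolve, ?_⟩
    intro y hy
    have h0 : T (y - hB.continuousLinearEquivOfBilin.symm (g - A f₀)) = 0 := by
      rw [map_sub, hy, hsolve, sub_self]
    exact sub_eq_zero.mp (hker _ h0)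
  refine ⟨hex, ?_⟩
  intro q hq
  have hAAs : ∀ y : Y, A ((adjoint A) y) = D y := by
    intro y; rw [← hD]; rfl
  have hqe : D q + α • q = g - A f₀ := by rw [← hTapp]; exact hq
  set fs : X := f₀ + (adjoint A) q with hfs
  have hres : A fs - g = -(α • q) := by
    have h1 : A fs - g = A f₀ + D q - g := by rw [hfs, map_add, hAAs]
    have h2 : g - A f₀ - D q = α • q := by rw [← hqe]; abel
    rw [h1, ← h2]; abel
  have key : ∀ f : X, ‖A f - g‖ ^ 2 + α * ‖f - f₀‖ ^ 2 =
      (‖A fs - g‖ ^ 2 + α * ‖fs - f₀‖ ^ 2) + (‖A (f - fs)‖ ^ 2 + α * ‖f - fs‖ ^ 2) := by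
    intro f
    have h1 : A f - g = (A fs - g) + A (f - fs) := by rw [map_sub]; abel
    have h2 : f - f₀ = (fs - f₀) + (f - fs) := by abel
    rw [h1, h2, norm_add_sq_real, norm_add_sq_real]
    have hc1 : (inner ℝ (A fs - g) (A (f - fs)) : ℝ) = -α * inner ℝ q (A (f - fs)) := by
      rw [hres, inner_neg_left, real_inner_smul_left]; ring
    have hc2 : (inner ℝ (fs - f₀) (f - fs) : ℝ) = inner ℝ q (A (f - fs)) := by
      have h3 : fs - f₀ = (adjoint A) q := by rw [hfs]; abel
      rw [h3, adjoint_inner_left]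
    rw [hc1, hc2]; ring
  constructor
  · intro f
    have := key f
    nlinarith [sq_nonneg ‖A (f - fs)‖, sq_nonneg ‖f - fs‖]
  · intro f hmin
    have h1 := hmin fs
    have h2 := key f
    have h3 : α * ‖f - fs‖ ^ 2 ≤ 0 := by nlinarith [sq_nonneg ‖A (f - fs)‖]
    have h4 : ‖f - fs‖ ^ 2 ≤ 0 := le_of_mul_le_mul_left (by linarith) hα
    have h5 : ‖f - fs‖ = 0 := by nlinarith [sq_nonneg ‖f - fs‖, norm_nonneg (f - fs)]
    have h6 : f - fs = 0 := by simpa using h5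
    exact sub_eq_zero.mp h6
end

section
/- Let Ω ⊆ ℝ³ be bounded open with 0 ∉ closure(Ω), 𝒟 the cone-beam projector from the origin, w(x)=|x|⁻², ũ = 𝒟(w), and 𝒟^B(p)(x) = p(x/|x|)1_Ω(x) the back-projection. Then p ↦ w·𝒟^B(ũ^{-1/2}·p) is an isometry from L²(D) to L²(Ω), where D = {φ ∈ 𝕊² : ũ(φ) > 0}: ‖w·𝒟^B(ũ^{-1/2}p)‖²_{L²(Ω)} = ‖p‖²_{L²(D)}. -/
open MeasureTheory Set Metric

noncomputable section

/-- Cone-beam isometry: `p ↦ w·𝒟^B(ũ^{-1/2}·p)` with `w(x)=|x|⁻²`,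
`ũ = 𝒟(w)`, is an isometry from `L²(D)` (`D = {ũ > 0}`) to `L²(Ω)`.
Functions on the sphere are modeled as 0-homogeneous functions on `ℝ³`. -/
theorem stmt11
    (Ω : Set (EuclideanSpace ℝ (Fin 3))) (hΩm : MeasurableSet Ω) (hΩo : IsOpen Ω)
    (hΩb : Bornology.IsBounded Ω) (h0 : (0 : EuclideanSpace ℝ (Fin 3)) ∉ closure Ω)
    (u : EuclideanSpace ℝ (Fin 3) → ℝ)
    (hu : ∀ x : EuclideanSpace ℝ (Fin 3), ‖x‖ = 1 →
      u x = ∫ t in Set.Ioi (0 : ℝ),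
        Set.indicator Ω (fun y : EuclideanSpace ℝ (Fin 3) => (‖y‖ ^ 2)⁻¹) (t • x))
    (huhom : ∀ c : ℝ, 0 < c → ∀ x, u (c • x) = u x)
    (p : EuclideanSpace ℝ (Fin 3) → ℝ) (hpm : Measurable p)
    (hphom : ∀ c : ℝ, 0 < c → ∀ x, p (c • x) = p x)
    (hp2 : MemLp (fun φ : Metric.sphere (0 : EuclideanSpace ℝ (Fin 3)) 1 => p ↑φ) 2
      ((volume : Measure (EuclideanSpace ℝ (Fin 3))).toSphere))
    (hsupp : ∀ x, u x = 0 → p x = 0) :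
    (∫ x : EuclideanSpace ℝ (Fin 3),
        ((‖x‖ ^ 2)⁻¹ *
          Set.indicator Ω (fun y => p y / Real.sqrt (u y)) x) ^ 2 ∂volume)
      = ∫ φ : Metric.sphere (0 : EuclideanSpace ℝ (Fin 3)) 1, (p ↑φ) ^ 2
          ∂((volume : Measure (EuclideanSpace ℝ (Fin 3))).toSphere) := by
  classical
  set g0 : EuclideanSpace ℝ (Fin 3) → ℝ := fun y => (‖y‖ ^ 2)⁻¹ with hg0def
  have hg0m : Measurable g0 := (measurable_norm.pow_const 2).inv
  have hg0nn : ∀ y, 0 ≤ g0 y := fun y => by positivity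
  -- radii bounds
  obtain ⟨a, ha, haΩ⟩ : ∃ a > (0:ℝ), ∀ x ∈ Ω, a ≤ ‖x‖ := by
    have hopen : IsOpen (closure Ω)ᶜ := isClosed_closure.isOpen_compl
    obtain ⟨a, ha, hball⟩ := Metric.isOpen_iff.1 hopen 0 (Set.mem_compl h0)
    refine ⟨a, ha, fun x hx => ?_⟩
    by_contra h
    push_neg at h
    have : x ∈ (closure Ω)ᶜ := hball (by simpa [Metric.mem_ball, dist_zero_right] using h)
    exact this (subset_closure hx)
  obtain ⟨R, hR⟩ : ∃ R : ℝ, ∀ x ∈ Ω, ‖x‖ ≤ R := by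
    obtain ⟨R, hR⟩ := hΩb.subset_closedBall 0
    exact ⟨R, fun x hx => by simpa [Metric.mem_closedBall, dist_zero_right] using hR hx⟩
  -- the measurable version of u
  set U : EuclideanSpace ℝ (Fin 3) → ℝ :=
    fun x => ∫ t in Set.Ioi (0:ℝ), Set.indicator Ω g0 (t • (‖x‖⁻¹ • x)) with hUdef
  have hUm : Measurable U := by
    have hsm : StronglyMeasurable fun z : EuclideanSpace ℝ (Fin 3) × ℝ =>
        Set.indicator Ω g0 (z.2 • (‖z.1‖⁻¹ • z.1)) := by
      have hmap : Measurable fun z : EuclideanSpace ℝ (Fin 3) × ℝ => z.2 • (‖z.1‖⁻¹ • z.1) :=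
        measurable_snd.smul ((measurable_norm.comp measurable_fst).inv.smul measurable_fst)
      exact (Measurable.stronglyMeasurable (fun s hs => by
        exact (hg0m.indicator hΩm) hs |>.preimage hmap |> id) : _)
    exact (hsm.integral_prod_right').measurable
  have hUeq : ∀ x : EuclideanSpace ℝ (Fin 3), x ≠ 0 → U x = u x := by
    intro x hx
    have hn : ‖x‖ ≠ 0 := norm_ne_zero_iff.2 hx
    have h1 : ‖‖x‖⁻¹ • x‖ = 1 := by
      rw [norm_smul, norm_inv, norm_norm, inv_mul_cancel₀ hn]
    have h2 := hu _ h1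
    rw [hUdef]
    dsimp only
    rw [← h2, huhom _ (by positivity) x]
  have hUsphere : ∀ φ : EuclideanSpace ℝ (Fin 3), ‖φ‖ = 1 → ∀ t : ℝ, 0 < t →
      U (t • φ) = u φ := by
    intro φ hφ t ht
    have hne : t • φ ≠ 0 := by
      intro h
      rcases smul_eq_zero.1 h with h | h
      · exact ht.ne' h
      · simp [h] at hφ
    rw [hUeq _ hne, huhom t ht]
  have hunn : ∀ φ : EuclideanSpace ℝ (Fin 3), ‖φ‖ = 1 → 0 ≤ u φ := by
    intro φ hφ
    rw [hu φ hφ]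
    exact integral_nonneg fun t => Set.indicator_nonneg (fun y _ => hg0nn y) _
  -- measurable integrand
  set F : EuclideanSpace ℝ (Fin 3) → ℝ := fun x =>
      ((‖x‖ ^ 2)⁻¹ * Set.indicator Ω (fun y => p y / Real.sqrt (U y)) x) ^ 2 with hFdef
  have hFm : Measurable F := by
    have h1 : Measurable fun y : EuclideanSpace ℝ (Fin 3) => p y / Real.sqrt (U y) :=
      hpm.div hUm.sqrt
    exact ((measurable_norm.pow_const 2).inv.mul (h1.indicator hΩm)).pow_const 2
  have hFnn : ∀ x, 0 ≤ F x := fun x => sq_nonneg _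
  -- replace u by U a.e.
  have hae0 : ∀ᵐ x ∂(volume : Measure (EuclideanSpace ℝ (Fin 3))),
      x ≠ (0 : EuclideanSpace ℝ (Fin 3)) := by
    simpa using (Set.countable_singleton (0 : EuclideanSpace ℝ (Fin 3))).ae_notMem
      (volume : Measure (EuclideanSpace ℝ (Fin 3)))
  have hFae : (fun x : EuclideanSpace ℝ (Fin 3) =>
      ((‖x‖ ^ 2)⁻¹ * Set.indicator Ω (fun y => p y / Real.sqrt (u y)) x) ^ 2)
      =ᵐ[(volume : Measure (EuclideanSpace ℝ (Fin 3)))] F := by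
    filter_upwards [hae0] with x hx
    rw [hFdef]
    dsimp only
    congr 2
    simp only [Set.indicator_apply]
    split_ifs with h
    · rw [hUeq x hx]
    · rfl
  -- LHS as lintegral
  rw [integral_congr_ae hFae,
    integral_eq_lintegral_of_nonneg_ae (ae_of_all _ hFnn) hFm.aestronglyMeasurable,
    integral_eq_lintegral_of_nonneg_ae (ae_of_all _ fun φ => sq_nonneg _)
      (hp2.aestronglyMeasurable.aemeasurable.pow_const 2).aestronglyMeasurable]
  congr 1
  -- now the lintegral identity
  set G : EuclideanSpace ℝ (Fin 3) → ENNReal := fun x => ENNReal.ofReal (F x) with hGdef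
  have hGm : Measurable G := hFm.ennreal_ofReal
  have hdim : Module.finrank ℝ (EuclideanSpace ℝ (Fin 3)) - 1 = 2 := by
    simp [finrank_euclideanSpace_fin]
  have mp := (volume :
      Measure (EuclideanSpace ℝ (Fin 3))).measurePreserving_homeomorphUnitSphereProd
  rw [hdim] at mp
  set G2 : Metric.sphere (0 : EuclideanSpace ℝ (Fin 3)) 1 × Set.Ioi (0:ℝ) → ENNReal :=
    fun z => G (z.2.1 • (z.1 : EuclideanSpace ℝ (Fin 3))) with hG2def
  have hG2m : Measurable G2 := by
    have hc : Continuous fun z : Metric.sphere (0 : EuclideanSpace ℝ (Fin 3)) 1 × Set.Ioi (0:ℝ) =>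
        z.2.1 • (z.1 : EuclideanSpace ℝ (Fin 3)) :=
      (continuous_subtype_val.comp continuous_snd).smul (continuous_subtype_val.comp continuous_fst)
    exact hGm.comp hc.measurable
  -- inner integral computation
  have inner : ∀ φ : Metric.sphere (0 : EuclideanSpace ℝ (Fin 3)) 1,
      (∫⁻ t : Set.Ioi (0:ℝ), G2 (φ, t) ∂Measure.volumeIoiPow 2)
        = ENNReal.ofReal ((p (φ : EuclideanSpace ℝ (Fin 3))) ^ 2) := by
    intro φ
    have hφ : ‖(φ : EuclideanSpace ℝ (Fin 3))‖ = 1 := mem_sphere_zero_iff_norm.1 φ.2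
    set c : ℝ := (p (φ : EuclideanSpace ℝ (Fin 3))) ^ 2 / u (φ : EuclideanSpace ℝ (Fin 3))
      with hcdef
    have hcnn : 0 ≤ c := div_nonneg (sq_nonneg _) (hunn _ hφ)
    have hd : Measurable fun r : Set.Ioi (0:ℝ) => ENNReal.ofReal (r.1 ^ 2) :=
      (measurable_subtype_coe.pow_const 2).ennreal_ofReal
    have hg : Measurable fun t : Set.Ioi (0:ℝ) => G2 (φ, t) := hG2m.comp measurable_prodMk_left
    rw [Measure.volumeIoiPow, lintegral_withDensity_eq_lintegral_mul _ hd hg]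
    have hsub := setLIntegral_subtype (μ := (volume : Measure ℝ)) (s := Set.Ioi (0:ℝ))
      measurableSet_Ioi Set.univ
      (fun t : ℝ => ENNReal.ofReal (t ^ 2) * G (t • (φ : EuclideanSpace ℝ (Fin 3))))
    simp only [Measure.restrict_univ, Subtype.coe_image_univ] at hsub
    have heq1 : ∫⁻ (a : Set.Ioi (0:ℝ)),
        ((fun r : Set.Ioi (0:ℝ) => ENNReal.ofReal (r.1 ^ 2)) * fun t => G2 (φ, t)) a
          ∂Measure.comap Subtype.val volume
        = ∫⁻ t in Set.Ioi (0:ℝ), ENNReal.ofReal (t ^ 2)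
            * G (t • (φ : EuclideanSpace ℝ (Fin 3))) ∂volume := by
      rw [← hsub]
      rfl
    rw [heq1]
    have hpoint : ∀ᵐ t ∂(volume : Measure ℝ), t ∈ Set.Ioi (0:ℝ) →
        ENNReal.ofReal (t ^ 2) * G (t • (φ : EuclideanSpace ℝ (Fin 3)))
          = ENNReal.ofReal c
            * ENNReal.ofReal (Set.indicator Ω g0 (t • (φ : EuclideanSpace ℝ (Fin 3)))) := by
      refine ae_of_all _ fun t ht => ?_
      have ht' : (0:ℝ) < t := ht
      have hnorm : ‖t • (φ : EuclideanSpace ℝ (Fin 3))‖ = t := by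
        rw [norm_smul, hφ, mul_one, Real.norm_eq_abs, abs_of_pos ht']
      by_cases hmem : t • (φ : EuclideanSpace ℝ (Fin 3)) ∈ Ω
      · have hq : (p (φ : EuclideanSpace ℝ (Fin 3))
            / Real.sqrt (u (φ : EuclideanSpace ℝ (Fin 3)))) ^ 2 = c := by
          rcases eq_or_lt_of_le (hunn _ hφ) with h | h
          · rw [hcdef, ← h, hsupp _ h.symm]
            simp
          · rw [div_pow, Real.sq_sqrt h.le, hcdef]
        have hFval : F (t • (φ : EuclideanSpace ℝ (Fin 3)))
            = (t ^ 2)⁻¹ * c * (t ^ 2)⁻¹ := by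
          rw [hFdef]
          dsimp only
          rw [Set.indicator_of_mem hmem, hphom t ht', hUsphere _ hφ t ht', hnorm, mul_pow, hq]
          ring
        rw [hGdef]
        dsimp only
        rw [hFval, Set.indicator_of_mem hmem, hg0def]
        dsimp only
        rw [hnorm, ← ENNReal.ofReal_mul (by positivity), ← ENNReal.ofReal_mul hcnn]
        congr 1
        have ht2 : (t:ℝ) ^ 2 ≠ 0 := by positivity
        field_simp
      · rw [hGdef]
        dsimp only
        rw [hFdef]
        dsimp only
        rw [Set.indicator_of_notMem hmem, Set.indicator_of_notMem hmem]
        simp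
    rw [setLIntegral_congr_fun_ae measurableSet_Ioi hpoint,
      lintegral_const_mul' _ _ ENNReal.ofReal_ne_top]
    -- ∫⁻ ofReal (indicator) = ofReal (u φ)
    have hmeasInd : Measurable fun t : ℝ =>
        Set.indicator Ω g0 (t • (φ : EuclideanSpace ℝ (Fin 3))) :=
      (hg0m.indicator hΩm).comp (measurable_id.smul_const _)
    have hIndnn : ∀ t : ℝ, 0 ≤ Set.indicator Ω g0 (t • (φ : EuclideanSpace ℝ (Fin 3))) :=
      fun t => Set.indicator_nonneg (fun y _ => hg0nn y) _
    have hInt : Integrable (fun t : ℝ => Set.indicator Ω g0 (t • (φ : EuclideanSpace ℝ (Fin 3))))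
        (volume.restrict (Set.Ioi 0)) := by
      refine Integrable.mono' (g := Set.indicator (Set.Icc a R) fun _ => (a^2)⁻¹)
        ?_ hmeasInd.aestronglyMeasurable ?_
      · refine Integrable.restrict ?_
        refine IntegrableOn.integrable_indicator ?_ measurableSet_Icc
        exact integrableOn_const (by simp [Real.volume_Icc])
      · filter_upwards [ae_restrict_mem measurableSet_Ioi] with t ht
        have ht' : (0:ℝ) < t := ht
        have hnorm : ‖t • (φ : EuclideanSpace ℝ (Fin 3))‖ = t := by
          rw [norm_smul, hφ, mul_one, Real.norm_eq_abs, abs_of_pos ht']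
        by_cases hmem : t • (φ : EuclideanSpace ℝ (Fin 3)) ∈ Ω
        · have h1 : a ≤ t := hnorm ▸ haΩ _ hmem
          have h2 : t ≤ R := hnorm ▸ hR _ hmem
          rw [Set.indicator_of_mem hmem, Set.indicator_of_mem (Set.mem_Icc.2 ⟨h1, h2⟩),
            Real.norm_eq_abs, abs_of_nonneg (hg0nn _), hg0def]
          dsimp only
          rw [hnorm]
          have haa : (0:ℝ) < a ^ 2 := by positivity
          exact inv_anti₀ haa (by nlinarith)
        · rw [Set.indicator_of_notMem hmem]
          simp only [norm_zero]
          exact Set.indicator_nonneg (fun y _ => by positivity) _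
    have hofReal := ofReal_integral_eq_lintegral_ofReal hInt
      (ae_of_all _ fun t => hIndnn t)
    rw [← hofReal, ← hu _ hφ, ← ENNReal.ofReal_mul hcnn]
    rcases eq_or_lt_of_le (hunn _ hφ) with h | h
    · rw [hcdef, ← h, hsupp _ h.symm]
      simp
    · rw [hcdef, div_mul_cancel₀ _ h.ne']
  -- assemble
  calc ∫⁻ x, G x ∂(volume : Measure (EuclideanSpace ℝ (Fin 3)))
      = ∫⁻ x in ({(0 : EuclideanSpace ℝ (Fin 3))}ᶜ : Set (EuclideanSpace ℝ (Fin 3))), G x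
          ∂volume := by rw [restrict_compl_singleton]
    _ = ∫⁻ x : ({(0 : EuclideanSpace ℝ (Fin 3))}ᶜ : Set (EuclideanSpace ℝ (Fin 3))), G ↑x
          ∂(Measure.comap Subtype.val volume) := by
        have hsub := setLIntegral_subtype (μ := (volume : Measure (EuclideanSpace ℝ (Fin 3))))
          (measurableSet_singleton (0 : EuclideanSpace ℝ (Fin 3))).compl Set.univ G
        simp only [Measure.restrict_univ, Subtype.coe_image_univ] at hsub
        rw [hsub]
    _ = ∫⁻ x : ({(0 : EuclideanSpace ℝ (Fin 3))}ᶜ : Set (EuclideanSpace ℝ (Fin 3))),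
          G2 (homeomorphUnitSphereProd (EuclideanSpace ℝ (Fin 3)) x)
          ∂(Measure.comap Subtype.val volume) := by
        refine lintegral_congr fun x => ?_
        have hx : (x : EuclideanSpace ℝ (Fin 3)) ≠ 0 := x.2
        have hn : ‖(x : EuclideanSpace ℝ (Fin 3))‖ ≠ 0 := norm_ne_zero_iff.2 hx
        rw [hG2def]
        dsimp only
        rw [homeomorphUnitSphereProd_apply_fst_coe, homeomorphUnitSphereProd_apply_snd_coe,
          smul_smul, mul_inv_cancel₀ hn, one_smul]
    _ = ∫⁻ z, G2 z ∂((volume :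
          Measure (EuclideanSpace ℝ (Fin 3))).toSphere.prod (Measure.volumeIoiPow 2)) :=
        mp.lintegral_comp hG2m
    _ = ∫⁻ φ : Metric.sphere (0 : EuclideanSpace ℝ (Fin 3)) 1,
          ∫⁻ t : Set.Ioi (0:ℝ), G2 (φ, t) ∂Measure.volumeIoiPow 2
          ∂(volume : Measure (EuclideanSpace ℝ (Fin 3))).toSphere :=
        lintegral_prod _ hG2m.aemeasurable
    _ = ∫⁻ φ : Metric.sphere (0 : EuclideanSpace ℝ (Fin 3)) 1,
          ENNReal.ofReal ((p (φ : EuclideanSpace ℝ (Fin 3))) ^ 2)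
          ∂(volume : Measure (EuclideanSpace ℝ (Fin 3))).toSphere :=
        lintegral_congr fun φ => inner φ
end
end
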